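/- Fix a > 0, d₁ > 0, d₂ > 0, λ > 0, w_o > 0 and angles θ_i, θ_r with sin θ_i > 0 and sin θ_r > 0. Let k = 2π/λ and w₁ = λ d₁/(π w_o). For L_x > 0, L_y > 0 define G̃₂(L_x, L_y) = erf((√2/2) L_x sin θ_i / w₁) · erf((√2/2) L_y / w₁), c₁ = k sin θ_r L_x/(2 d₂), c₂ = k L_y/(2 d₂), and G̃₁(L_x, L_y) = (16 d₂² G̃₂(L_x,L_y) / (π³ a² k² L_x L_y sin θ_r)) · [c₁ a √π · Si(c₁ a √π) + cos(c₁ a √π) − 1] · [c₂ a √π · Si(c₂ a √π) + cos(c₂ a √π) − 1]. Then, as (L_x, L_y) → (0⁺, 0⁺), G̃₁(L_x, L_y)/(L_x L_y)² converges to 2 π² a² w_o² sin θ_i sin θ_r / (λ⁴ d₁² d₂²); i.e., for small surfaces G̃₁ ≈ G₁ := 4π · (4π Σ² sin θ_r sin θ_i / λ⁴) · g_LS · g_PD with Σ = L_x L_y, g_LS = 2π w_o²/(4π d₁²) and g_PD = π a²/(4π d₂²), so the collected power scales quadratically with the surface area Σ. -/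

import Mathlib

open Real MeasureTheory Filter

/-- The error function `erf x = (2/√π) ∫₀ˣ e^{-t²} dt`. -/
noncomputable def erf (x : ℝ) : ℝ := (2 / Real.sqrt π) * ∫ t in (0:ℝ)..x, Real.exp (-t^2)

/-- The sine integral `Si x = ∫₀ˣ (sin t)/t dt`. -/
noncomputable def Si (x : ℝ) : ℝ := ∫ t in (0:ℝ)..x, Real.sin t / t

noncomputable def sinc (t : ℝ) : ℝ := if t = 0 then 1 else Real.sin t / t

lemma sinc_tendsto : Tendsto _root_.sinc (nhds (0:ℝ)) (nhds 1) := by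
  rw [← nhdsNE_sup_pure (0:ℝ), tendsto_sup]
  constructor
  · have h := (Real.hasDerivAt_sin 0)
    rw [hasDerivAt_iff_tendsto_slope] at h
    rw [Real.cos_zero] at h
    refine h.congr' ?_
    filter_upwards [self_mem_nhdsWithin] with x hx
    have hx' : x ≠ 0 := hx
    simp [slope, _root_.sinc, hx', Real.sin_zero, div_eq_inv_mul]
  · simpa [_root_.sinc] using tendsto_pure_nhds _root_.sinc 0

lemma sinc_meas : Measurable _root_.sinc :=
  Measurable.ite (measurableSet_singleton 0) measurable_const
    (Real.measurable_sin.div measurable_id)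

lemma Si_eq (x : ℝ) : Si x = ∫ t in (0:ℝ)..x, _root_.sinc t := by
  apply intervalIntegral.integral_congr_ae
  have h0 : ∀ᵐ t : ℝ, t ≠ 0 := by
    rw [ae_iff]
    simp [show {a : ℝ | ¬a ≠ 0} = {0} by ext; simp]
  filter_upwards [h0] with t ht _
  simp [_root_.sinc, ht]

lemma Si_div : Tendsto (fun x => Si x / x) (nhdsWithin (0:ℝ) {0}ᶜ) (nhds 1) := by
  have hd : HasDerivAt (fun u => ∫ t in (0:ℝ)..u, _root_.sinc t) (_root_.sinc 0) 0 := by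
    refine intervalIntegral.integral_hasDerivAt_right IntervalIntegrable.refl
      (sinc_meas.stronglyMeasurable.stronglyMeasurableAtFilter) ?_
    have : _root_.sinc 0 = 1 := by simp [_root_.sinc]
    rw [ContinuousAt, this]
    exact sinc_tendsto
  rw [hasDerivAt_iff_tendsto_slope] at hd
  have h0 : _root_.sinc 0 = 1 := by simp [_root_.sinc]
  rw [h0] at hd
  refine hd.congr' ?_
  filter_upwards [self_mem_nhdsWithin] with x hx
  have hx' : x ≠ 0 := hx
  simp [slope, Si_eq, div_eq_inv_mul]

lemma erf_div : Tendsto (fun x => erf x / x) (nhdsWithin (0:ℝ) {0}ᶜ)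
    (nhds (2 / Real.sqrt π)) := by
  have hd : HasDerivAt (fun u => ∫ t in (0:ℝ)..u, Real.exp (-t^2)) (Real.exp (-(0:ℝ)^2)) 0 := by
    refine intervalIntegral.integral_hasDerivAt_right IntervalIntegrable.refl
      ?_ ?_
    · exact (Real.continuous_exp.comp (continuous_pow 2).neg).stronglyMeasurable.stronglyMeasurableAtFilter
    · exact (Real.continuous_exp.comp (continuous_pow 2).neg).continuousAt
  rw [hasDerivAt_iff_tendsto_slope] at hd
  have h0 : Real.exp (-(0:ℝ)^2) = 1 := by norm_num
  rw [h0] at hd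
  have := hd.const_mul (2 / Real.sqrt π)
  rw [mul_one] at this
  refine this.congr' ?_
  filter_upwards [self_mem_nhdsWithin] with x hx
  have hx' : x ≠ 0 := hx
  simp [slope, erf, div_eq_inv_mul]
  ring

lemma cos_div : Tendsto (fun x => (Real.cos x - 1) / x^2) (nhdsWithin (0:ℝ) {0}ᶜ)
    (nhds (-(1/2))) := by
  have hhalf : Tendsto (fun x : ℝ => _root_.sinc (x/2)) (nhdsWithin (0:ℝ) {0}ᶜ) (nhds 1) := by
    refine sinc_tendsto.comp ?_
    have : Tendsto (fun x : ℝ => x/2) (nhds (0:ℝ)) (nhds 0) := by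
      simpa using (continuous_id.div_const 2).tendsto (0:ℝ)
    exact this.mono_left nhdsWithin_le_nhds
  have h1 : Tendsto (fun x : ℝ => -(_root_.sinc (x/2))^2/2) (nhdsWithin (0:ℝ) {0}ᶜ)
      (nhds (-(1:ℝ)^2/2)) := ((hhalf.pow 2).neg).div_const 2
  norm_num at h1
  refine h1.congr' ?_
  filter_upwards [self_mem_nhdsWithin] with x hx
  have hx' : x ≠ 0 := hx
  have hc : Real.cos x = 1 - 2 * Real.sin (x/2)^2 := by
    have := Real.cos_two_mul (x/2)
    rw [show 2 * (x/2) = x by ring] at this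
    rw [this, Real.cos_sq']
    ring
  have hs : _root_.sinc (x/2) = Real.sin (x/2) / (x/2) := by
    simp [_root_.sinc, hx']
  rw [hs, hc]
  field_simp
  ring

lemma g_div : Tendsto (fun u => (u * Si u + Real.cos u - 1) / u^2)
    (nhdsWithin (0:ℝ) {0}ᶜ) (nhds (1/2)) := by
  have h := Si_div.add cos_div
  norm_num at h
  refine h.congr' ?_
  filter_upwards [self_mem_nhdsWithin] with u hu
  have hu' : u ≠ 0 := hu
  field_simp
  ring

lemma factor_tendsto (α γ : ℝ) (hα : 0 < α) (hγ : 0 < γ) :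
    Tendsto (fun x => erf (α*x) * (γ*x * Si (γ*x) + Real.cos (γ*x) - 1) / x^3)
      (nhdsWithin (0:ℝ) (Set.Ioi 0)) (nhds (α * γ^2 / Real.sqrt π)) := by
  have hmapα : Tendsto (fun x : ℝ => α*x) (nhdsWithin (0:ℝ) (Set.Ioi 0))
      (nhdsWithin (0:ℝ) {0}ᶜ) := by
    refine tendsto_nhdsWithin_of_tendsto_nhds_of_eventually_within _ ?_ ?_
    · have : Tendsto (fun x : ℝ => α*x) (nhds (0:ℝ)) (nhds (α*0)) :=
        (continuous_const.mul continuous_id).tendsto 0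
      rw [mul_zero] at this
      exact this.mono_left nhdsWithin_le_nhds
    · filter_upwards [self_mem_nhdsWithin] with x hx
      exact (mul_pos hα hx).ne'
  have hmapγ : Tendsto (fun x : ℝ => γ*x) (nhdsWithin (0:ℝ) (Set.Ioi 0))
      (nhdsWithin (0:ℝ) {0}ᶜ) := by
    refine tendsto_nhdsWithin_of_tendsto_nhds_of_eventually_within _ ?_ ?_
    · have : Tendsto (fun x : ℝ => γ*x) (nhds (0:ℝ)) (nhds (γ*0)) :=
        (continuous_const.mul continuous_id).tendsto 0
      rw [mul_zero] at this
      exact this.mono_left nhdsWithin_le_nhds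
    · filter_upwards [self_mem_nhdsWithin] with x hx
      exact (mul_pos hγ hx).ne'
  have h1 := erf_div.comp hmapα
  have h2 := g_div.comp hmapγ
  have h3 := (h1.mul h2).mul_const (α * γ^2)
  have hval : 2 / Real.sqrt π * (1/2) * (α * γ^2) = α * γ^2 / Real.sqrt π := by ring
  rw [hval] at h3
  refine h3.congr' ?_
  filter_upwards [self_mem_nhdsWithin] with x hx
  have hx' : (x:ℝ) ≠ 0 := (Set.mem_Ioi.mp hx).ne'
  have hαx : α * x ≠ 0 := (mul_pos hα hx).ne'
  have hγx : γ * x ≠ 0 := (mul_pos hγ hx).ne'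
  simp only [Function.comp]
  field_simp

/-- Corollary 1 (quadratic power scaling regime): as `(Lx, Ly) → (0⁺, 0⁺)`, the geometric
loss `G̃₁(Lx, Ly)` of Lemma 1 satisfies
`G̃₁(Lx,Ly)/(Lx Ly)² → 2π² a² w_o² sin θi sin θr / (λ⁴ d₁² d₂²)`, i.e. `G̃₁ ≈ G₁` with
`G₁ = 4π (4π Σ² sin θr sin θi / λ⁴) g_LS g_PD`, `Σ = Lx Ly`, `g_LS = 2π w_o²/(4π d₁²)`,
`g_PD = π a²/(4π d₂²)`. -/
theorem quadratic_power_scaling (a d₁ d₂ lam w_o θi θr k w₁ : ℝ)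
    (ha : 0 < a) (hd₁ : 0 < d₁) (hd₂ : 0 < d₂) (hlam : 0 < lam) (hwo : 0 < w_o)
    (hθi : 0 < Real.sin θi) (hθr : 0 < Real.sin θr)
    (hk : k = 2 * π / lam) (hw₁ : w₁ = lam * d₁ / (π * w_o))
    (G₂t : ℝ → ℝ → ℝ)
    (hG₂t : ∀ Lx Ly, G₂t Lx Ly =
      erf (Real.sqrt 2 / 2 * (Lx * Real.sin θi / w₁)) * erf (Real.sqrt 2 / 2 * (Ly / w₁)))
    (c₁ c₂ : ℝ → ℝ)
    (hc₁ : ∀ Lx, c₁ Lx = k * Real.sin θr * Lx / (2 * d₂))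
    (hc₂ : ∀ Ly, c₂ Ly = k * Ly / (2 * d₂))
    (G₁t : ℝ → ℝ → ℝ)
    (hG₁t : ∀ Lx Ly, G₁t Lx Ly =
      (16 * d₂ ^ 2 * G₂t Lx Ly / (π ^ 3 * a ^ 2 * k ^ 2 * Lx * Ly * Real.sin θr)) *
        (c₁ Lx * a * Real.sqrt π * Si (c₁ Lx * a * Real.sqrt π)
          + Real.cos (c₁ Lx * a * Real.sqrt π) - 1) *
        (c₂ Ly * a * Real.sqrt π * Si (c₂ Ly * a * Real.sqrt π)
          + Real.cos (c₂ Ly * a * Real.sqrt π) - 1)) :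
    Tendsto (fun p : ℝ × ℝ => G₁t p.1 p.2 / (p.1 * p.2) ^ 2)
      ((nhdsWithin 0 (Set.Ioi 0)) ×ˢ (nhdsWithin 0 (Set.Ioi 0)))
      (nhds (2 * π ^ 2 * a ^ 2 * w_o ^ 2 * Real.sin θi * Real.sin θr
        / (lam ^ 4 * d₁ ^ 2 * d₂ ^ 2))) ∧
    ∀ Sig : ℝ, 0 < Sig →
      4 * π * (4 * π * Sig ^ 2 * Real.sin θr * Real.sin θi / lam ^ 4) *
          (2 * π * w_o ^ 2 / (4 * π * d₁ ^ 2)) * (π * a ^ 2 / (4 * π * d₂ ^ 2)) =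
        (2 * π ^ 2 * a ^ 2 * w_o ^ 2 * Real.sin θi * Real.sin θr
          / (lam ^ 4 * d₁ ^ 2 * d₂ ^ 2)) * Sig ^ 2 := by
  have hπ : (0:ℝ) < π := Real.pi_pos
  have hw₁pos : 0 < w₁ := by
    rw [hw₁]; positivity
  have hkpos : 0 < k := by
    rw [hk]; positivity
  have hsqπ : Real.sqrt π > 0 := Real.sqrt_pos.mpr hπ
  have hsq2 : Real.sqrt 2 > 0 := Real.sqrt_pos.mpr (by norm_num)
  have hsπ2 : Real.sqrt π ^ 2 = π := Real.sq_sqrt hπ.le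
  have hs22 : Real.sqrt 2 ^ 2 = 2 := Real.sq_sqrt (by norm_num)
  constructor
  · set α := Real.sqrt 2 / 2 * (Real.sin θi / w₁) with hα_def
    set δ := Real.sqrt 2 / 2 * (1 / w₁) with hδ_def
    set γ₁ := k * Real.sin θr * a * Real.sqrt π / (2 * d₂) with hγ₁_def
    set γ₂ := k * a * Real.sqrt π / (2 * d₂) with hγ₂_def
    set C := 16 * d₂ ^ 2 / (π ^ 3 * a ^ 2 * k ^ 2 * Real.sin θr) with hC_def
    have hαpos : 0 < α := by rw [hα_def]; positivity
    have hδpos : 0 < δ := by rw [hδ_def]; positivity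
    have hγ₁pos : 0 < γ₁ := by rw [hγ₁_def]; positivity
    have hγ₂pos : 0 < γ₂ := by rw [hγ₂_def]; positivity
    have hx := factor_tendsto α γ₁ hαpos hγ₁pos
    have hy := factor_tendsto δ γ₂ hδpos hγ₂pos
    have hT := ((hx.comp (tendsto_fst : Tendsto Prod.fst
        ((nhdsWithin (0:ℝ) (Set.Ioi 0)) ×ˢ (nhdsWithin (0:ℝ) (Set.Ioi 0))) _)).mul
      (hy.comp tendsto_snd)).const_mul C
    have hval : C * (α * γ₁^2 / Real.sqrt π * (δ * γ₂^2 / Real.sqrt π)) =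
        2 * π ^ 2 * a ^ 2 * w_o ^ 2 * Real.sin θi * Real.sin θr
          / (lam ^ 4 * d₁ ^ 2 * d₂ ^ 2) := by
      have hαδ : α * δ = Real.sin θi / (2 * w₁^2) := by
        rw [hα_def, hδ_def]
        rw [show Real.sqrt 2/2 * (Real.sin θi/w₁) * (Real.sqrt 2/2*(1/w₁))
            = (Real.sqrt 2^2) * Real.sin θi/(4*w₁^2) by ring, hs22]
        ring
      have hγγ : γ₁^2 * γ₂^2 = k^4 * Real.sin θr^2 * a^4 * π^2/(16*d₂^4) := by
        rw [hγ₁_def, hγ₂_def]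
        rw [show (k * Real.sin θr * a * Real.sqrt π/(2*d₂))^2 * (k*a*Real.sqrt π/(2*d₂))^2
            = (Real.sqrt π^2)^2 * (k^4 * Real.sin θr^2*a^4/(16*d₂^4)) by ring, hsπ2]
        ring
      have hL : C * (α * γ₁^2 / Real.sqrt π * (δ * γ₂^2 / Real.sqrt π)) =
          C * (α*δ) * (γ₁^2*γ₂^2) / (Real.sqrt π^2) := by ring
      rw [hL, hsπ2, hαδ, hγγ, hC_def, hk, hw₁]
      have hπ0 : π ≠ 0 := hπ.ne'
      have hlam0 : lam ≠ 0 := hlam.ne'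
      have hd₁0 : d₁ ≠ 0 := hd₁.ne'
      have hd₂0 : d₂ ≠ 0 := hd₂.ne'
      have hwo0 : w_o ≠ 0 := hwo.ne'
      have ha0 : a ≠ 0 := ha.ne'
      have hθr0 : Real.sin θr ≠ 0 := hθr.ne'
      field_simp
    rw [hval] at hT
    refine hT.congr' ?_
    filter_upwards [Filter.prod_mem_prod self_mem_nhdsWithin self_mem_nhdsWithin] with p hp
    obtain ⟨hx1, hy1⟩ := hp
    have hx0 : (p.1:ℝ) ≠ 0 := (Set.mem_Ioi.mp hx1).ne'
    have hy0 : (p.2:ℝ) ≠ 0 := (Set.mem_Ioi.mp hy1).ne'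
    simp only [Function.comp]
    rw [hG₁t, hG₂t, hc₁, hc₂]
    have e1 : Real.sqrt 2 / 2 * (p.1 * Real.sin θi / w₁) = α * p.1 := by
      rw [hα_def]; ring
    have e2 : Real.sqrt 2 / 2 * (p.2 / w₁) = δ * p.2 := by
      rw [hδ_def]; ring
    have e3 : k * Real.sin θr * p.1 / (2 * d₂) * a * Real.sqrt π = γ₁ * p.1 := by
      rw [hγ₁_def]; ring
    have e4 : k * p.2 / (2 * d₂) * a * Real.sqrt π = γ₂ * p.2 := by
      rw [hγ₂_def]; ring
    rw [e1, e2, e3, e4, hC_def]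
    field_simp
  · intro Sig hSig
    field_simp
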